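/- Let B₀, …, B_{n-1} be pairwise interior-disjoint closed disks in the Euclidean plane with positive radii. Then there exists x ∈ [1,2] such that the number of indices i for which the circle of radius x centered at the origin intersects B_i is at most 4·√n. -/

import Mathlib

open MeasureTheory Metric Set Real

noncomputable section

namespace DiskHelper

local notation "E" => EuclideanSpace ℝ (Fin 2)

lemma vol_ball2 (x : EuclideanSpace ℝ (Fin 2)) (s : ℝ) :
    volume (Metric.ball x s) = ENNReal.ofReal s ^ 2 * ENNReal.ofReal π := by
  have hG : Real.Gamma 2 = 1 := by
    rw [show (2:ℝ) = 1 + 1 by norm_num, Real.Gamma_add_one one_ne_zero, Real.Gamma_one, mul_one]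
  rw [EuclideanSpace.volume_ball]
  rw [Fintype.card_fin]
  norm_num
  rw [← ENNReal.ofReal_pow (Real.sqrt_nonneg _), sq_sqrt Real.pi_nonneg]

lemma vol_cball2 (x : EuclideanSpace ℝ (Fin 2)) (s : ℝ) :
    volume (Metric.closedBall x s) = ENNReal.ofReal s ^ 2 * ENNReal.ofReal π := by
  rw [MeasureTheory.Measure.addHaar_closedBall_eq_addHaar_ball, vol_ball2]


lemma unit_vec (p : EuclideanSpace ℝ (Fin 2)) :
    ∃ u : EuclideanSpace ℝ (Fin 2), ‖u‖ = 1 ∧ p = ‖p‖ • u := by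
  by_cases hp : p = 0
  · refine ⟨EuclideanSpace.single (0 : Fin 2) (1:ℝ), ?_, ?_⟩
    · simp [EuclideanSpace.norm_single]
    · simp [hp]
  · refine ⟨‖p‖⁻¹ • p, ?_, ?_⟩
    · rw [norm_smul, norm_inv, norm_norm, inv_mul_cancel₀ (norm_ne_zero_iff.2 hp)]
    · rw [smul_smul, mul_inv_cancel₀ (norm_ne_zero_iff.2 hp), one_smul]

lemma sphere_meets_ball_iff {x : ℝ} (hx : 0 ≤ x) (p : EuclideanSpace ℝ (Fin 2)) (r : ℝ) :
    (Metric.sphere (0:EuclideanSpace ℝ (Fin 2)) x ∩ Metric.closedBall p r).Nonempty ↔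
      |‖p‖ - x| ≤ r := by
  constructor
  · rintro ⟨y, hy1, hy2⟩
    rw [mem_sphere_zero_iff_norm] at hy1
    rw [Metric.mem_closedBall, dist_eq_norm] at hy2
    calc |‖p‖ - x| = |‖p‖ - ‖y‖| := by rw [hy1]
      _ ≤ ‖p - y‖ := abs_norm_sub_norm_le p y
      _ = ‖y - p‖ := by rw [norm_sub_rev]
      _ ≤ r := hy2
  · intro h
    obtain ⟨u, hu, hpu⟩ := unit_vec p
    refine ⟨x • u, ?_, ?_⟩
    · rw [mem_sphere_zero_iff_norm, norm_smul, hu, mul_one, Real.norm_eq_abs, abs_of_nonneg hx]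
    · rw [Metric.mem_closedBall, dist_eq_norm]
      calc ‖x • u - p‖ = ‖(x - ‖p‖) • u‖ := by rw [sub_smul, ← hpu]
        _ = |x - ‖p‖| := by rw [norm_smul, hu, mul_one, Real.norm_eq_abs]
        _ = |‖p‖ - x| := abs_sub_comm _ _
        _ ≤ r := h


lemma toReal_ofReal_max (t : ℝ) : (ENNReal.ofReal t).toReal = max t 0 := by
  rcases le_total t 0 with h|h
  · rw [ENNReal.ofReal_eq_zero.2 h, max_eq_right h]; simp
  · rw [ENNReal.toReal_ofReal h, max_eq_left h]

end DiskHelper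

open DiskHelper

/-- For pairwise interior-disjoint closed disks of positive radii in the plane, there
is a radius `x ∈ [1,2]` such that at most `4 √n` of the disks meet the circle of
radius `x` centered at the origin. -/
theorem exists_radius_few_disks_hit
    (n : ℕ) (p : Fin n → EuclideanSpace ℝ (Fin 2)) (r : Fin n → ℝ)
    (hr : ∀ i, 0 < r i)
    (hdisj : Pairwise fun i j =>
      Disjoint (Metric.ball (p i) (r i)) (Metric.ball (p j) (r j))) :
    ∃ x ∈ Set.Icc (1 : ℝ) 2,
      (({i : Fin n | (Metric.sphere (0 : EuclideanSpace ℝ (Fin 2)) x ∩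
        Metric.closedBall (p i) (r i)).Nonempty}).ncard : ℝ) ≤ 4 * Real.sqrt n := by
  classical
  set a : Fin n → ℝ := fun i => max (‖p i‖ - r i) 1 with ha
  set b : Fin n → ℝ := fun i => min (‖p i‖ + r i) 2 with hb
  set L : Fin n → ℝ := fun i => max (b i - a i) 0 with hLdef
  have hL0 : ∀ i, 0 ≤ L i := fun i => le_max_right _ _
  -- geometric key : sum of squares bounded by 16
  have key1 : ∑ i, L i ^ 2 ≤ 16 := by
    choose u hu hpu using fun i => unit_vec (p i)
    set m : Fin n → EuclideanSpace ℝ (Fin 2) := fun i => ((a i + b i)/2) • u i with hm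
    have hmp : ∀ i, dist (m i) (p i) = |(a i + b i)/2 - ‖p i‖| := by
      intro i
      rw [dist_eq_norm]
      calc ‖m i - p i‖ = ‖((a i + b i)/2 - ‖p i‖) • u i‖ := by
            rw [sub_smul, ← hpu]
        _ = |(a i + b i)/2 - ‖p i‖| := by
            rw [norm_smul, hu, mul_one, Real.norm_eq_abs]
    have hsub : ∀ i, Metric.ball (m i) (L i / 2) ⊆ Metric.ball (p i) (r i) := by
      intro i z hz
      have hzm : dist z (m i) < L i / 2 := hz
      rcases le_or_gt (b i) (a i) with hba | hba
      · have hL : L i = 0 := max_eq_right (by linarith)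
        rw [hL] at hzm
        have := dist_nonneg (x := z) (y := m i)
        norm_num at hzm
        linarith
      · have hLi : L i = b i - a i := max_eq_left (by linarith)
        have h1 : ‖p i‖ - r i ≤ a i := le_max_left _ _
        have h2 : b i ≤ ‖p i‖ + r i := min_le_left _ _
        have habs : |(a i + b i)/2 - ‖p i‖| ≤ r i - L i / 2 := by
          rw [abs_le]
          constructor <;> [skip; skip] <;> [linarith; linarith]
        rw [Metric.mem_ball]
        have htri := dist_triangle z (m i) (p i)
        rw [hmp i] at htri
        linarith
    have hsub2 : ∀ i, Metric.ball (m i) (L i / 2) ⊆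
        Metric.closedBall (0 : EuclideanSpace ℝ (Fin 2)) 2 := by
      intro i z hz
      have hzm : dist z (m i) < L i / 2 := hz
      rcases le_or_gt (b i) (a i) with hba | hba
      · have hL : L i = 0 := max_eq_right (by linarith)
        rw [hL] at hzm
        have := dist_nonneg (x := z) (y := m i)
        norm_num at hzm
        linarith
      · have hLi : L i = b i - a i := max_eq_left (by linarith)
        have ha1 : 1 ≤ a i := le_max_right _ _
        have hb2 : b i ≤ 2 := min_le_right _ _
        have hnm : ‖m i‖ = (a i + b i)/2 := by
          rw [hm]
          simp only []
          rw [norm_smul, hu, mul_one, Real.norm_eq_abs, abs_of_nonneg (by linarith)]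
        rw [Metric.mem_closedBall, dist_zero_right]
        have htri : ‖z‖ ≤ dist z (m i) + ‖m i‖ := by
          calc ‖z‖ = dist z 0 := (dist_zero_right z).symm
            _ ≤ dist z (m i) + dist (m i) 0 := dist_triangle _ _ _
            _ = dist z (m i) + ‖m i‖ := by rw [dist_zero_right]
        rw [hnm] at htri
        linarith
    -- disjointness and measure comparison
    have hdisjD : (↑(Finset.univ : Finset (Fin n)) : Set (Fin n)).Pairwise
        (Function.onFun Disjoint (fun i => Metric.ball (m i) (L i / 2))) := by
      intro i _ j _ hij
      exact Disjoint.mono (hsub i) (hsub j) (hdisj hij)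
    have hvol : ∑ i, volume (Metric.ball (m i) (L i / 2)) ≤
        volume (Metric.closedBall (0 : EuclideanSpace ℝ (Fin 2)) 2) := by
      rw [← measure_biUnion_finset hdisjD (fun i _ => measurableSet_ball)]
      exact measure_mono (Set.iUnion₂_subset fun i _ => hsub2 i)
    rw [vol_cball2] at hvol
    have hterm : ∀ i, volume (Metric.ball (m i) (L i / 2)) =
        ENNReal.ofReal ((L i / 2) ^ 2) * ENNReal.ofReal π := by
      intro i
      rw [vol_ball2, ENNReal.ofReal_pow (by positivity)]
    simp only [hterm] at hvol
    rw [← Finset.sum_mul] at hvol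
    have h2 : (ENNReal.ofReal (2:ℝ)) ^ 2 = ENNReal.ofReal 4 := by
      rw [← ENNReal.ofReal_pow (by norm_num)]
      norm_num
    rw [h2] at hvol
    rw [← ENNReal.ofReal_sum_of_nonneg (fun i _ => by positivity)] at hvol
    have hπ : (0:ℝ) < π := Real.pi_pos
    have hsum : ∑ i, (L i / 2) ^ 2 ≤ 4 := by
      have := (ENNReal.mul_le_mul_iff_left (by simp [hπ, ENNReal.ofReal_pos]) (by simp)).1 hvol
      have h4 : (0:ℝ) ≤ 4 := by norm_num
      exact (ENNReal.ofReal_le_ofReal_iff h4).1 this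
    have : ∑ i, (L i / 2) ^ 2 = (∑ i, L i ^ 2) / 4 := by
      rw [Finset.sum_div]
      exact Finset.sum_congr rfl fun i _ => by ring
    linarith [hsum, this ▸ hsum]
  -- Cauchy-Schwarz
  have key2 : ∑ i, L i ≤ 4 * Real.sqrt n := by
    have hcs := sq_sum_le_card_mul_sum_sq (s := Finset.univ) (f := L)
    rw [Finset.card_univ, Fintype.card_fin] at hcs
    have hsumnn : 0 ≤ ∑ i, L i := Finset.sum_nonneg fun i _ => hL0 i
    have hsq : Real.sqrt n ^ 2 = n := Real.sq_sqrt (Nat.cast_nonneg n)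
    nlinarith [Real.sqrt_nonneg (n:ℝ), key1, hcs,
      sq_nonneg (∑ i, L i - 4 * Real.sqrt n)]
  -- integral bookkeeping
  set μ := volume.restrict (Set.Icc (1:ℝ) 2) with hμ
  have hμuniv : μ Set.univ = 1 := by
    rw [hμ, Measure.restrict_apply_univ, Real.volume_Icc]
    norm_num
  set g : ℝ → ℝ := fun x =>
    ∑ i, (Set.Icc (‖p i‖ - r i) (‖p i‖ + r i)).indicator (fun _ => (1:ℝ)) x with hg
  have hind_int : ∀ i : Fin n,
      Integrable ((Set.Icc (‖p i‖ - r i) (‖p i‖ + r i)).indicator (fun _ => (1:ℝ))) μ := by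
    intro i
    refine (integrable_indicator_iff measurableSet_Icc).2 ?_
    refine (integrableOn_const_iff).2 (Or.inr ?_)
    refine lt_of_le_of_lt (Measure.restrict_le_self _) ?_
    rw [Real.volume_Icc]
    exact ENNReal.ofReal_lt_top
  have hg_int : Integrable g μ := integrable_finset_sum _ fun i _ => hind_int i
  have hgval : ∫ x, g x ∂μ = ∑ i, L i := by
    rw [hg, integral_finset_sum _ fun i _ => hind_int i]
    refine Finset.sum_congr rfl fun i _ => ?_
    rw [integral_indicator measurableSet_Icc, setIntegral_const, smul_eq_mul, mul_one, hμ,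
      measureReal_restrict_apply measurableSet_Icc, measureReal_def, Set.Icc_inter_Icc, Real.volume_Icc,
      toReal_ofReal_max]
  -- pointwise identification of the counting function
  have hcard : ∀ x ∈ Set.Icc (1:ℝ) 2,
      (({i : Fin n | (Metric.sphere (0 : EuclideanSpace ℝ (Fin 2)) x ∩
        Metric.closedBall (p i) (r i)).Nonempty}).ncard : ℝ) = g x := by
    intro x hx
    have hx0 : (0:ℝ) ≤ x := by linarith [hx.1]
    have hset : {i : Fin n | (Metric.sphere (0 : EuclideanSpace ℝ (Fin 2)) x ∩
        Metric.closedBall (p i) (r i)).Nonempty} =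
        {i : Fin n | x ∈ Set.Icc (‖p i‖ - r i) (‖p i‖ + r i)} := by
      ext i
      rw [Set.mem_setOf_eq, Set.mem_setOf_eq, sphere_meets_ball_iff hx0, Set.mem_Icc, abs_le]
      constructor <;> rintro ⟨h1', h2'⟩ <;> constructor <;> linarith
    rw [hset, Set.ncard_eq_toFinset_card', Set.toFinset_setOf, Finset.card_filter, hg,
      Nat.cast_sum]
    refine Finset.sum_congr rfl fun i _ => ?_
    by_cases hmem : x ∈ Set.Icc (‖p i‖ - r i) (‖p i‖ + r i) <;>
      simp [hmem, Set.indicator_apply]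
  set f : ℝ → ℝ := fun x =>
    (({i : Fin n | (Metric.sphere (0 : EuclideanSpace ℝ (Fin 2)) x ∩
      Metric.closedBall (p i) (r i)).Nonempty}).ncard : ℝ) with hf
  have hfg : f =ᵐ[μ] g := by
    filter_upwards [ae_restrict_mem measurableSet_Icc] with x hx using hcard x hx
  have hf_int : Integrable f μ := hg_int.congr hfg.symm
  have hfI : ∫ x, f x ∂μ = ∑ i, L i := (integral_congr_ae hfg).trans hgval
  by_contra hcon
  push_neg at hcon
  set c := 4 * Real.sqrt n with hc
  have hc0 : 0 ≤ c := by positivity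
  set k : ℕ := ⌊c⌋₊ + 1 with hk
  have hkf : ∀ x ∈ Set.Icc (1:ℝ) 2, (k:ℝ) ≤ f x := by
    intro x hx
    have h1 := hcon x hx
    have h2 : ⌊c⌋₊ < ({i : Fin n | (Metric.sphere (0 : EuclideanSpace ℝ (Fin 2)) x ∩
        Metric.closedBall (p i) (r i)).Nonempty}).ncard := (Nat.floor_lt hc0).2 h1
    have h3 : k ≤ ({i : Fin n | (Metric.sphere (0 : EuclideanSpace ℝ (Fin 2)) x ∩
        Metric.closedBall (p i) (r i)).Nonempty}).ncard := h2
    simp only [hf]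
    exact_mod_cast h3
  have hmono : ∫ _x, (k:ℝ) ∂μ ≤ ∫ x, f x ∂μ := by
    refine integral_mono_ae (integrable_const _) hf_int ?_
    filter_upwards [ae_restrict_mem measurableSet_Icc] with x hx using hkf x hx
  rw [integral_const, measureReal_def, hμuniv] at hmono
  simp only [ENNReal.toReal_one, one_smul] at hmono
  have hck : c < (k:ℝ) := by
    rw [hk]
    push_cast
    exact Nat.lt_floor_add_one c
  rw [hfI] at hmono
  linarith [key2, hmono, hck]
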